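/- Let f, g ∈ 𝒢. Then f ≾ g if and only if every g-comonotonic random vector of real random variables on Ω is f-comonotonic. -/

import Mathlib

open MeasureTheory Filter Set

section Defs

variable {Ω : Type*} [MeasurableSpace Ω]

/-- An atomless probability space: every event can be split to achieve any smaller measure
(Sierpiński's property, equivalent to atomlessness for probability measures). -/
def Atomless (P : Measure Ω) : Prop :=
  ∀ A : Set Ω, MeasurableSet A → ∀ r : ENNReal, r ≤ P A →
    ∃ B : Set Ω, B ⊆ A ∧ MeasurableSet B ∧ P B = r

/-- `A` is a tail event for `X`: outside a null set, `X ω ≥ X ω'` for `ω ∈ A`, `ω' ∈ Aᶜ`. -/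
def IsTailEvent (P : Measure Ω) (X : Ω → ℝ) (A : Set Ω) : Prop :=
  MeasurableSet A ∧ ∃ N : Set Ω, P N = 0 ∧
    ∀ ω ∈ A, ω ∉ N → ∀ ω' ∈ Aᶜ, ω' ∉ N → X ω' ≤ X ω

/-- `A` is a `p`-tail event for `X`: a tail event with `P A = 1 - p`. -/
def IsPTailEvent (P : Measure Ω) (X : Ω → ℝ) (p : ℝ) (A : Set Ω) : Prop :=
  IsTailEvent P X A ∧ P A = ENNReal.ofReal (1 - p)

/-- A random vector is `p`-concentrated if a single event is a `p`-tail event for every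
component. -/
def PConcentrated (P : Measure Ω) {d : ℕ} (X : Fin d → Ω → ℝ) (p : ℝ) : Prop :=
  ∃ A : Set Ω, ∀ i, IsPTailEvent P (X i) p A

/-- A random vector is `K`-concentrated if it is `p`-concentrated for every `p ∈ K`. -/
def KConcentrated (P : Measure Ω) {d : ℕ} (X : Fin d → Ω → ℝ) (K : Set ℝ) : Prop :=
  ∀ p ∈ K, PConcentrated P X p

/-- Left quantile function `Q_X⁻(p) = inf {x | ℙ(X ≤ x) ≥ p}` (also `VaR_p`). -/
noncomputable def leftQuantile (P : Measure Ω) (X : Ω → ℝ) (p : ℝ) : ℝ :=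
  sInf {x : ℝ | ENNReal.ofReal p ≤ P {ω | X ω ≤ x}}

/-- Right quantile function `Q_X⁺(p) = inf {x | ℙ(X ≤ x) > p}` (also `VaR⁺_p`). -/
noncomputable def rightQuantile (P : Measure Ω) (X : Ω → ℝ) (p : ℝ) : ℝ :=
  sInf {x : ℝ | ENNReal.ofReal p < P {ω | X ω ≤ x}}

/-- `Q_X : [0,1] → ℝ`, equal to `Q_X⁺` at `0` and to `Q_X⁻` on `(0,1]`. -/
noncomputable def Q (P : Measure Ω) (X : Ω → ℝ) (p : ℝ) : ℝ :=
  if p = 0 then rightQuantile P X 0 else leftQuantile P X p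

/-- Membership in L∞: essentially bounded (and measurable) random variables. -/
def MemLinf (P : Measure Ω) (X : Ω → ℝ) : Prop :=
  Measurable X ∧ ∃ C : ℝ, ∀ᵐ ω ∂P, |X ω| ≤ C

/-- A functional `ρ` on L∞ is `K`-additive if it is additive on every `K`-concentrated
random vector (of dimension `d ≥ 2`) with essentially bounded components. -/
def KAdditive (P : Measure Ω) (K : Set ℝ) (ρ : (Ω → ℝ) → ℝ) : Prop :=
  ∀ d : ℕ, 2 ≤ d → ∀ X : Fin d → Ω → ℝ, (∀ i, MemLinf P (X i)) →
    KConcentrated P X K → ρ (∑ i, X i) = ∑ i, ρ (X i)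

/-- A pair of random variables is comonotonic. -/
def ComonotonePair (P : Measure Ω) (X Z : Ω → ℝ) : Prop :=
  ∀ᵐ w ∂(P.prod P), 0 ≤ (X w.1 - X w.2) * (Z w.1 - Z w.2)

/-- A random vector is `g`-comonotonic: some random variable `Z` with quantile function `g`
on `[0,1]` is comonotonic with every component. -/
def GComonotone (P : Measure Ω) {d : ℕ} (g : ℝ → ℝ) (X : Fin d → Ω → ℝ) : Prop :=
  ∃ Z : Ω → ℝ, Measurable Z ∧ (∀ p ∈ Icc (0:ℝ) 1, Q P Z p = g p) ∧
    ∀ i, ComonotonePair P (X i) Z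

/-- A functional `ρ` on L∞ is `g`-additive if it is additive on every `g`-comonotonic
random vector (of dimension `d ≥ 2`) with essentially bounded components. -/
def GAdditive (P : Measure Ω) (g : ℝ → ℝ) (ρ : (Ω → ℝ) → ℝ) : Prop :=
  ∀ d : ℕ, 2 ≤ d → ∀ X : Fin d → Ω → ℝ, (∀ i, MemLinf P (X i)) →
    GComonotone P g X → ρ (∑ i, X i) = ∑ i, ρ (X i)

/-- The distortion riskmetric `I_h`. -/
noncomputable def distortionRM (P : Measure Ω) (h : ℝ → ℝ) (X : Ω → ℝ) : ℝ :=
  (∫ x in Iio (0:ℝ), (h ((P {ω | x < X ω}).toReal) - h 1)) +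
    ∫ x in Ioi (0:ℝ), h ((P {ω | x < X ω}).toReal)

/-- The spectral risk measure `ρ_g(X) = ∫₀¹ g(t) Q_X(t) dt`. -/
noncomputable def specRM (P : Measure Ω) (g : ℝ → ℝ) (X : Ω → ℝ) : ℝ :=
  ∫ t in (0:ℝ)..1, g t * Q P X t

/-- Expected Shortfall at level `p`. -/
noncomputable def ES (P : Measure Ω) (p : ℝ) (X : Ω → ℝ) : ℝ :=
  (1 - p)⁻¹ * ∫ q in p..1, leftQuantile P X q

end Defs

/-- The class 𝒢 of increasing functions on `[0,1]`, right-continuous at `0` and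
left-continuous on `(0,1]`. -/
def MemG (g : ℝ → ℝ) : Prop :=
  MonotoneOn g (Icc 0 1) ∧
    Tendsto g (nhdsWithin 0 (Ioi 0)) (nhds (g 0)) ∧
    ∀ p ∈ Ioc (0:ℝ) 1, Tendsto g (nhdsWithin p (Iio p)) (nhds (g p))

/-- `p` is a point of strict increase on the right of `g`. -/
def IsPSIR (g : ℝ → ℝ) (p : ℝ) : Prop :=
  p ∈ Ico (0:ℝ) 1 ∧ ∀ s ∈ Ioc p 1, g p < g s

/-- `p` is a point of strict increase on the left of `g`. -/
def IsPSIL (g : ℝ → ℝ) (p : ℝ) : Prop :=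
  p ∈ Ioc (0:ℝ) 1 ∧ ∀ s ∈ Ico (0:ℝ) p, g s < g p

/-- The set of points of strict increase of `g`. -/
def PSI (g : ℝ → ℝ) : Set ℝ :=
  {p | IsPSIR g p ∨ IsPSIL g p}

/-- `f ≾ g`: there is an increasing `h` with `f = h ∘ g` a.e. on `[0,1]`. -/
def Prec (f g : ℝ → ℝ) : Prop :=
  ∃ h : ℝ → ℝ, Monotone h ∧
    ∀ᵐ t ∂(volume.restrict (Icc (0:ℝ) 1)), f t = h (g t)

/-- The map `𝒱 : K ↦ (p ↦ sup ((0,p) ∩ K))` (with `sup ∅ = 0`, the junk value of `sSup` in `ℝ`). -/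
noncomputable def VK (K : Set ℝ) (p : ℝ) : ℝ :=
  sSup (Ioo (0:ℝ) p ∩ K)

/-- A risk spectrum: a nonnegative element of 𝒢 integrating to 1. -/
def IsRiskSpectrum (g : ℝ → ℝ) : Prop :=
  MemG g ∧ (∀ t ∈ Icc (0:ℝ) 1, 0 ≤ g t) ∧ (∫ t in (0:ℝ)..1, g t) = 1

set_option linter.unusedSectionVars false
set_option linter.unusedVariables false
set_option maxHeartbeats 1000000

namespace St6

variable {Ω : Type*} [MeasurableSpace Ω] (P : Measure Ω) [IsProbabilityMeasure P]
variable {X : Ω → ℝ}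


lemma cdf_mono {x y : ℝ} (hxy : x ≤ y) : P {ω | X ω ≤ x} ≤ P {ω | X ω ≤ y} :=
  measure_mono fun ω hω => le_trans hω hxy

lemma exists_cdf_lt (hX : Measurable X) {e : ENNReal} (he : 0 < e) :
    ∃ x₀ : ℝ, P {ω | X ω ≤ x₀} < e := by
  have hmeas : ∀ n : ℕ, NullMeasurableSet {ω | X ω ≤ -(n:ℝ)} P :=
    fun n => (hX measurableSet_Iic).nullMeasurableSet
  have hanti : Antitone (fun n : ℕ => {ω | X ω ≤ -(n:ℝ)}) := by
    intro n m hnm ω hω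
    simp only [mem_setOf_eq] at *
    have : -(m:ℝ) ≤ -(n:ℝ) := by exact_mod_cast neg_le_neg (by exact_mod_cast hnm)
    linarith
  have hint : (⋂ n : ℕ, {ω | X ω ≤ -(n:ℝ)}) = ∅ := by
    ext ω
    simp only [mem_iInter, mem_setOf_eq, mem_empty_iff_false, iff_false, not_forall]
    obtain ⟨n, hn⟩ := exists_nat_gt (-(X ω))
    exact ⟨n, by push_neg; linarith⟩
  have htd := tendsto_measure_iInter_atTop (μ := P) hmeas hanti ⟨0, measure_ne_top _ _⟩
  rw [hint, measure_empty] at htd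
  obtain ⟨n, hn⟩ := (htd.eventually_lt_const he).exists
  exact ⟨-(n:ℝ), hn⟩

lemma exists_cdf_gt (hX : Measurable X) {e : ENNReal} (he : e < 1) :
    ∃ x : ℝ, e < P {ω | X ω ≤ x} := by
  have hmono : Monotone (fun n : ℕ => {ω | X ω ≤ (n:ℝ)}) := by
    intro n m hnm ω hω
    simp only [mem_setOf_eq] at *
    exact le_trans hω (by exact_mod_cast hnm)
  have huni : (⋃ n : ℕ, {ω | X ω ≤ (n:ℝ)}) = univ := by
    ext ω
    simp only [mem_iUnion, mem_setOf_eq, mem_univ, iff_true]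
    obtain ⟨n, hn⟩ := exists_nat_gt (X ω)
    exact ⟨n, hn.le⟩
  have htd := tendsto_measure_iUnion_atTop (μ := P) hmono
  rw [huni, measure_univ] at htd
  obtain ⟨n, hn⟩ := (htd.eventually_const_lt he).exists
  exact ⟨n, hn⟩

/-- The set in the definition of the left quantile. -/
lemma bddBelow_quantileSet (hX : Measurable X) {e : ENNReal} (he : 0 < e) :
    BddBelow {x : ℝ | e ≤ P {ω | X ω ≤ x}} := by
  obtain ⟨x₀, hx₀⟩ := exists_cdf_lt P hX he
  refine ⟨x₀, fun x hx => ?_⟩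
  by_contra hlt
  push_neg at hlt
  exact absurd (le_trans hx (cdf_mono P hlt.le)) (not_le.mpr hx₀)

lemma nonempty_quantileSet (hX : Measurable X) {e : ENNReal} (he : e < 1) :
    {x : ℝ | e ≤ P {ω | X ω ≤ x}}.Nonempty := by
  obtain ⟨x, hx⟩ := exists_cdf_gt P hX he
  exact ⟨x, hx.le⟩


/-- Right-continuity of the cdf at the infimum of a quantile set. -/
lemma cdf_csInf (hX : Measurable X) {e : ENNReal} {S : Set ℝ}
    (hS : ∀ x ∈ S, e ≤ P {ω | X ω ≤ x})
    (hne : S.Nonempty) (hbd : BddBelow S) : e ≤ P {ω | X ω ≤ sInf S} := by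
  set c := sInf S with hc
  have hmeas : ∀ n : ℕ, NullMeasurableSet {ω | X ω ≤ c + 1/(n+1:ℝ)} P :=
    fun n => (hX measurableSet_Iic).nullMeasurableSet
  have hanti : Antitone (fun n : ℕ => {ω | X ω ≤ c + 1/(n+1:ℝ)}) := by
    intro n m hnm ω hω
    simp only [mem_setOf_eq] at *
    have h1 : 1/(m+1:ℝ) ≤ 1/(n+1:ℝ) := by
      apply one_div_le_one_div_of_le (by positivity)
      exact_mod_cast Nat.add_le_add_right hnm 1
    linarith
  have hint : (⋂ n : ℕ, {ω | X ω ≤ c + 1/(n+1:ℝ)}) = {ω | X ω ≤ c} := by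
    ext ω
    simp only [mem_iInter, mem_setOf_eq]
    constructor
    · intro h
      by_contra hlt
      push_neg at hlt
      obtain ⟨n, hn⟩ := exists_nat_one_div_lt (sub_pos.mpr hlt)
      exact absurd (h n) (by push_neg; linarith)
    · intro h n
      have : (0:ℝ) < 1/(n+1:ℝ) := by positivity
      linarith
  have htd := tendsto_measure_iInter_atTop (μ := P) hmeas hanti ⟨0, measure_ne_top _ _⟩
  rw [hint] at htd
  refine ge_of_tendsto htd (Eventually.of_forall fun n => ?_)
  obtain ⟨y, hyS, hy⟩ : ∃ y ∈ S, y < c + 1/(n+1:ℝ) := by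
    apply exists_lt_of_csInf_lt hne
    have : (0:ℝ) < 1/(n+1:ℝ) := by positivity
    linarith
  exact le_trans (hS y hyS) (cdf_mono P hy.le)

/-- `P {X < c}` is at most `e` if the cdf is `≤ e` strictly below `c`. -/
lemma meas_lt_le {c : ℝ} {e : ENNReal} (h : ∀ x, x < c → P {ω | X ω ≤ x} ≤ e) :
    P {ω | X ω < c} ≤ e := by
  have hmono : Monotone (fun n : ℕ => {ω | X ω ≤ c - 1/(n+1:ℝ)}) := by
    intro n m hnm ω hω
    simp only [mem_setOf_eq] at *
    have h1 : 1/(m+1:ℝ) ≤ 1/(n+1:ℝ) := by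
      apply one_div_le_one_div_of_le (by positivity)
      exact_mod_cast Nat.add_le_add_right hnm 1
    linarith
  have huni : {ω | X ω < c} = ⋃ n : ℕ, {ω | X ω ≤ c - 1/(n+1:ℝ)} := by
    ext ω
    simp only [mem_iUnion, mem_setOf_eq]
    constructor
    · intro hlt
      obtain ⟨n, hn⟩ := exists_nat_one_div_lt (sub_pos.mpr hlt)
      exact ⟨n, by linarith⟩
    · rintro ⟨n, hn⟩
      have : (0:ℝ) < 1/(n+1:ℝ) := by positivity
      linarith
  rw [huni, hmono.measure_iUnion]
  refine iSup_le fun n => h _ ?_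
  have : (0:ℝ) < 1/(n+1:ℝ) := by positivity
  linarith

/-- `P {X < c}` as a sup of cdf values. -/
lemma meas_lt_eq_iSup (c : ℝ) :
    P {ω | X ω < c} = ⨆ n : ℕ, P {ω | X ω ≤ c - 1/(n+1:ℝ)} := by
  have hmono : Monotone (fun n : ℕ => {ω | X ω ≤ c - 1/(n+1:ℝ)}) := by
    intro n m hnm ω hω
    simp only [mem_setOf_eq] at *
    have h1 : 1/(m+1:ℝ) ≤ 1/(n+1:ℝ) := by
      apply one_div_le_one_div_of_le (by positivity)
      exact_mod_cast Nat.add_le_add_right hnm 1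
    linarith
  have huni : {ω | X ω < c} = ⋃ n : ℕ, {ω | X ω ≤ c - 1/(n+1:ℝ)} := by
    ext ω
    simp only [mem_iUnion, mem_setOf_eq]
    constructor
    · intro hlt
      obtain ⟨n, hn⟩ := exists_nat_one_div_lt (sub_pos.mpr hlt)
      exact ⟨n, by linarith⟩
    · rintro ⟨n, hn⟩
      have : (0:ℝ) < 1/(n+1:ℝ) := by positivity
      linarith
  rw [huni, hmono.measure_iUnion]


/-- dyadic measure value -/
noncomputable def dm (n k : ℕ) : ENNReal := min ((k : ENNReal) / 2^n) 1

lemma dm_mono (n : ℕ) {k k' : ℕ} (h : k ≤ k') : dm n k ≤ dm n k' := by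
  apply min_le_min _ le_rfl
  have hk : (k:ENNReal) ≤ k' := by exact_mod_cast h
  gcongr

lemma dm_double (n k : ℕ) : dm (n+1) (2*k) = dm n k := by
  unfold dm
  congr 1
  have : ((2:ENNReal))^(n+1) = 2 * 2^n := by rw [pow_succ, mul_comm]
  rw [this]
  push_cast
  exact ENNReal.mul_div_mul_left (k : ENNReal) _ (by norm_num) (by norm_num)

/-- The invariant for one dyadic level. -/
def DInv (n : ℕ) (s : ℕ → Set Ω) : Prop :=
  (∀ k, MeasurableSet (s k)) ∧ Monotone s ∧ (∀ k, P (s k) = dm n k) ∧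
    (∀ k, 2^n ≤ k → s k = univ)

lemma dinv_zero : DInv P 0 (fun k => if k = 0 then (∅ : Set Ω) else univ) := by
  refine ⟨fun k => ?_, fun k k' hk => ?_, fun k => ?_, fun k hk => ?_⟩
  · by_cases h : k = 0 <;> simp [h]
  · by_cases h : k = 0
    · simp [h]
    · have h' : k' ≠ 0 := by omega
      simp [h, h']
  · by_cases h : k = 0
    · simp [h, dm]
    · have h1 : (1:ENNReal) ≤ (k : ENNReal) / 2^0 := by
        rw [pow_zero, ENNReal.le_div_iff_mul_le (by norm_num) (by norm_num), one_mul]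
        exact_mod_cast Nat.one_le_iff_ne_zero.mpr h
      simp only [h, if_neg, if_false, measure_univ, dm]
      have h1' : (1:ENNReal) ≤ (k : ENNReal) / 2^0 := h1
      exact (min_eq_right h1').symm
  · have h : k ≠ 0 := by omega
    simp [h]

lemma dinv_step (hP : Atomless P) (n : ℕ) (s : ℕ → Set Ω) (h : DInv P n s) :
    ∃ t : ℕ → Set Ω, DInv P (n+1) t ∧ ∀ k, t (2*k) = s k := by
  obtain ⟨hmeas, hmono, hmeasure, huniv⟩ := h
  -- for every k, choose a piece of s (k/2+1) \ s (k/2)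
  have hex : ∀ k : ℕ, ∃ B : Set Ω, B ⊆ s (k/2+1) \ s (k/2) ∧ MeasurableSet B ∧
      P B = dm (n+1) k - dm n (k/2) := by
    intro k
    apply hP _ ((hmeas _).diff (hmeas _))
    rw [measure_diff (hmono (Nat.le_succ _)) (hmeas _).nullMeasurableSet (measure_ne_top _ _),
      hmeasure, hmeasure]
    have h1 : dm (n+1) k ≤ dm n (k/2+1) := by
      rw [← dm_double n (k/2+1)]
      exact dm_mono _ (by omega)
    exact tsub_le_tsub_right h1 _
  choose B hBsub hBmeas hBP using hex
  refine ⟨fun k => if k % 2 = 0 then s (k/2) else s (k/2) ∪ B k, ⟨fun k => ?_, ?_, fun k => ?_, fun k hk => ?_⟩, fun k => ?_⟩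
  · by_cases h : k % 2 = 0
    · simp only [h, if_pos]
      exact hmeas _
    · simp only [h, if_neg, if_false]
      exact (hmeas _).union (hBmeas _)
  · apply monotone_nat_of_le_succ
    intro k
    by_cases h : k % 2 = 0
    · have h' : ¬((k+1) % 2 = 0) := by omega
      have hd : (k+1)/2 = k/2 := by omega
      simp only [h, if_pos, h', if_neg, if_false, hd]
      exact subset_union_left
    · have h' : (k+1) % 2 = 0 := by omega
      have hd : (k+1)/2 = k/2 + 1 := by omega
      simp only [h, if_neg, if_false, h', if_pos, hd]
      apply union_subset (hmono (Nat.le_succ _))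
      exact (hBsub k).trans diff_subset
  · by_cases h : k % 2 = 0
    · have h2 : 2 * (k/2) = k := by omega
      simp only [h, if_pos]
      rw [hmeasure, ← dm_double, h2]
    · simp only [h, if_neg, if_false]
      have hdisj : Disjoint (s (k/2)) (B k) := by
        apply Set.disjoint_left.mpr
        intro ω hω hωB
        exact ((hBsub k) hωB).2 hω
      rw [measure_union hdisj (hBmeas k), hmeasure, hBP]
      have hle : dm n (k/2) ≤ dm (n+1) k := by
        rw [← dm_double n (k/2)]
        exact dm_mono _ (by omega)
      rw [add_comm]
      exact tsub_add_cancel_of_le hle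
  · have hk2 : 2^n ≤ k/2 := by
      rw [pow_succ] at hk
      omega
    by_cases h : k % 2 = 0
    · simp only [h, if_pos]
      exact huniv _ hk2
    · simp only [h, if_neg, if_false, huniv _ hk2, univ_union]
  · have h : (2*k) % 2 = 0 := by omega
    have h2 : (2*k)/2 = k := by omega
    simp only [h, if_pos, h2]

lemma exists_dyadic (hP : Atomless P) :
    ∃ S : ℕ → ℕ → Set Ω, (∀ n, DInv P n (S n)) ∧ ∀ n k, S (n+1) (2*k) = S n k := by
  choose t ht1 ht2 using dinv_step P hP
  set F : ∀ n : ℕ, {s : ℕ → Set Ω // DInv P n s} :=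
    fun n => Nat.rec ⟨_, dinv_zero P⟩ (fun n prev => ⟨t n prev.1 prev.2, ht1 n prev.1 prev.2⟩) n
    with hF
  exact ⟨fun n => (F n).1, fun n => (F n).2, fun n k => ht2 n (F n).1 (F n).2 k⟩

lemma exists_uniform (hP : Atomless P) :
    ∃ U : Ω → ℝ, Measurable U ∧ (∀ ω, U ω ∈ Icc (0:ℝ) 1) ∧
      ∀ x ∈ Icc (0:ℝ) 1, P {ω | U ω ≤ x} = ENNReal.ofReal x := by
  obtain ⟨S, hS, hSdouble⟩ := exists_dyadic P hP
  have hSmeas : ∀ n k, MeasurableSet (S n k) := fun n => (hS n).1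
  have hSmono : ∀ n, Monotone (S n) := fun n => (hS n).2.1
  have hSP : ∀ n k, P (S n k) = dm n k := fun n => (hS n).2.2.1
  have hSuniv : ∀ n k, 2^n ≤ k → S n k = univ := fun n => (hS n).2.2.2
  -- scaling across levels
  have hscale : ∀ j n k, S (n+j) (2^j * k) = S n k := by
    intro j
    induction j with
    | zero => intro n k; simp
    | succ j ih =>
      intro n k
      have h1 : 2^(j+1) * k = 2*(2^j * k) := by ring
      have h2 : n + (j+1) = (n+j) + 1 := by ring
      rw [h2, h1, hSdouble, ih]
  have hsub : ∀ n m k k', k * 2^m ≤ k' * 2^n → S n k ⊆ S m k' := by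
    intro n m k k' h
    have e1 : S n k = S (n+m) (2^m * k) := (hscale m n k).symm
    have e2 : S m k' = S (n+m) (2^n * k') := by rw [Nat.add_comm]; exact (hscale n m k').symm
    rw [e1, e2]
    rw [Nat.mul_comm (2^m) k, Nat.mul_comm (2^n) k'] at *
    exact hSmono _ h
  -- the uniform random variable
  set T : Ω → Set ℝ := fun ω => {x : ℝ | ∃ n k : ℕ, ω ∈ S n k ∧ x = (k:ℝ)/2^n} with hT
  have hT1 : ∀ ω, (1:ℝ) ∈ T ω := by
    intro ω
    refine ⟨0, 1, ?_, by norm_num⟩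
    rw [hSuniv 0 1 (by norm_num)]
    trivial
  have hTlb : ∀ ω x, x ∈ T ω → (0:ℝ) ≤ x := by
    rintro ω x ⟨n, k, _, rfl⟩
    positivity
  set U : Ω → ℝ := fun ω => sInf (T ω) with hU
  have hUIcc : ∀ ω, U ω ∈ Icc (0:ℝ) 1 :=
    fun ω => ⟨le_csInf ⟨1, hT1 ω⟩ (hTlb ω), csInf_le ⟨0, hTlb ω⟩ (hT1 ω)⟩
  have hUle : ∀ (ω : Ω) (n k : ℕ), ω ∈ S n k → U ω ≤ (k:ℝ)/2^n := by
    intro ω n k hω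
    exact csInf_le ⟨0, hTlb ω⟩ ⟨n, k, hω, rfl⟩
  have hUlt : ∀ (ω : Ω) (n k : ℕ), U ω < (k:ℝ)/2^n → ω ∈ S n k := by
    intro ω n k hlt
    obtain ⟨x, hxT, hx⟩ := exists_lt_of_csInf_lt ⟨1, hT1 ω⟩ hlt
    obtain ⟨n', k', hmem, rfl⟩ := hxT
    refine hsub n' n k' k ?_ hmem
    have hpos : (0:ℝ) < 2^n := by positivity
    have hpos' : (0:ℝ) < 2^n' := by positivity
    rw [div_lt_div_iff₀ hpos' hpos] at hx
    have : ((k' * 2^n : ℕ) : ℝ) < ((k * 2^n' : ℕ) : ℝ) := by push_cast; linarith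
    exact_mod_cast this.le
  have hUltset : ∀ x : ℝ, {ω | U ω < x} = ⋃ (n : ℕ) (k : ℕ) (_ : (k:ℝ)/2^n < x), S n k := by
    intro x
    ext ω
    simp only [mem_setOf_eq, mem_iUnion]
    constructor
    · intro hlt
      obtain ⟨y, hyT, hy⟩ := exists_lt_of_csInf_lt ⟨1, hT1 ω⟩ hlt
      obtain ⟨n, k, hmem, rfl⟩ := hyT
      exact ⟨n, k, hy, hmem⟩
    · rintro ⟨n, k, hklt, hmem⟩
      exact lt_of_le_of_lt (hUle ω n k hmem) hklt
  have hUmeas : Measurable U := by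
    apply measurable_of_Iio
    intro x
    rw [show U ⁻¹' (Iio x) = {ω | U ω < x} from rfl, hUltset x]
    exact MeasurableSet.iUnion fun n => MeasurableSet.iUnion fun k =>
      MeasurableSet.iUnion fun _ => hSmeas n k
  refine ⟨U, hUmeas, hUIcc, fun x hx => ?_⟩
  obtain ⟨hx0, hx1⟩ := hx
  -- dm in terms of ofReal
  have hdm : ∀ n k : ℕ, ((k : ENNReal)/2^n) = ENNReal.ofReal ((k:ℝ)/2^n) := by
    intro n k
    rw [ENNReal.ofReal_div_of_pos (by positivity)]
    congr 1
    · exact (ENNReal.ofReal_natCast k).symm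
    · rw [ENNReal.ofReal_pow (by norm_num : (0:ℝ) ≤ 2)]
      norm_num
  have h2pow : ∀ n : ℕ, (0:ℝ) < 2^n := fun n => by positivity
  apply le_antisymm
  · -- upper bound
    have key : ∀ n : ℕ, P {ω | U ω ≤ x} ≤ ENNReal.ofReal (x + 1/2^n) := by
      intro n
      set k : ℕ := ⌊x * 2^n⌋₊ + 1 with hk
      have hxk : x < (k:ℝ)/2^n := by
        rw [lt_div_iff₀ (h2pow n), hk]
        push_cast
        exact Nat.lt_floor_add_one _
      have hkx : (k:ℝ)/2^n ≤ x + 1/2^n := by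
        rw [div_le_iff₀ (h2pow n), hk]
        push_cast
        have := Nat.floor_le (a := x * 2^n) (by positivity)
        have h2 : (1/2^n : ℝ) * 2^n = 1 := by field_simp
        nlinarith [h2pow n]
      calc P {ω | U ω ≤ x} ≤ P (S n k) := by
            apply measure_mono
            intro ω hω
            exact hUlt ω n k (lt_of_le_of_lt hω hxk)
        _ = dm n k := hSP n k
        _ ≤ (k : ENNReal)/2^n := min_le_left _ _
        _ = ENNReal.ofReal ((k:ℝ)/2^n) := hdm n k
        _ ≤ ENNReal.ofReal (x + 1/2^n) := ENNReal.ofReal_le_ofReal hkx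
    have htend : Tendsto (fun n : ℕ => ENNReal.ofReal (x + 1/2^n)) atTop
        (nhds (ENNReal.ofReal x)) := by
      apply ENNReal.tendsto_ofReal
      have : Tendsto (fun n : ℕ => (1:ℝ)/2^n) atTop (nhds 0) := by
        simp only [one_div, ← inv_pow]
        exact tendsto_pow_atTop_nhds_zero_of_lt_one (by norm_num) (by norm_num)
      have := this.const_add x
      simpa using this
    exact ge_of_tendsto htend (Eventually.of_forall key)
  · -- lower bound
    have key : ∀ n : ℕ, ENNReal.ofReal (x - 1/2^n) ≤ P {ω | U ω ≤ x} := by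
      intro n
      set k : ℕ := ⌊x * 2^n⌋₊ with hk
      have hkx : (k:ℝ)/2^n ≤ x := by
        rw [div_le_iff₀ (h2pow n)]
        exact Nat.floor_le (by positivity)
      have hxk : x - 1/2^n ≤ (k:ℝ)/2^n := by
        rw [sub_le_iff_le_add, ← add_div, le_div_iff₀ (h2pow n)]
        have := Nat.lt_floor_add_one (x * 2^n)
        push_cast
        linarith
      calc ENNReal.ofReal (x - 1/2^n) ≤ ENNReal.ofReal ((k:ℝ)/2^n) :=
            ENNReal.ofReal_le_ofReal hxk
        _ = (k : ENNReal)/2^n := (hdm n k).symm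
        _ = dm n k := by
            unfold dm
            rw [min_eq_left]
            rw [hdm]
            exact le_trans (ENNReal.ofReal_le_ofReal hkx) (by simpa using ENNReal.ofReal_le_ofReal hx1)
        _ = P (S n k) := (hSP n k).symm
        _ ≤ P {ω | U ω ≤ x} := by
            apply measure_mono
            intro ω hω
            exact le_trans (hUle ω n k hω) hkx
    have htend : Tendsto (fun n : ℕ => ENNReal.ofReal (x - 1/2^n)) atTop
        (nhds (ENNReal.ofReal x)) := by
      apply ENNReal.tendsto_ofReal
      have : Tendsto (fun n : ℕ => (1:ℝ)/2^n) atTop (nhds 0) := by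
        simp only [one_div, ← inv_pow]
        exact tendsto_pow_atTop_nhds_zero_of_lt_one (by norm_num) (by norm_num)
      have h2 := (tendsto_const_nhds (x := x) (f := atTop (α := ℕ))).sub this
      simpa using h2
    exact le_of_tendsto htend (Eventually.of_forall key)


lemma Q_of_ne {X : Ω → ℝ} {p : ℝ} (hp : p ≠ 0) : Q P X p = leftQuantile P X p := if_neg hp

lemma quantile_comp_uniform {U : Ω → ℝ} (hUI : ∀ ω, U ω ∈ Icc (0:ℝ) 1)
    (hcdf : ∀ x ∈ Icc (0:ℝ) 1, P {ω | U ω ≤ x} = ENNReal.ofReal x)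
    {g : ℝ → ℝ} (hg : MemG g) :
    ∀ p ∈ Icc (0:ℝ) 1, Q P (fun ω => g (U ω)) p = g p := by
  obtain ⟨hgm, hgr, hgl⟩ := hg
  intro p hp
  by_cases hp0 : p = 0
  · -- right quantile at 0
    subst hp0
    have hQ : Q P (fun ω => g (U ω)) 0 = sInf {x : ℝ | 0 < P {ω | g (U ω) ≤ x}} := by
      simp [Q, rightQuantile]
    rw [hQ]
    have hmem : ∀ u : ℝ, u ∈ Ioc (0:ℝ) 1 → g u ∈ {x : ℝ | 0 < P {ω | g (U ω) ≤ x}} := by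
      intro u hu
      have hsub : {ω | U ω ≤ u} ⊆ {ω | g (U ω) ≤ g u} :=
        fun ω hω => hgm (hUI ω) ⟨hu.1.le, hu.2⟩ hω
      have h1 : ENNReal.ofReal u ≤ P {ω | g (U ω) ≤ g u} := by
        rw [← hcdf u ⟨hu.1.le, hu.2⟩]
        exact measure_mono hsub
      exact lt_of_lt_of_le (ENNReal.ofReal_pos.mpr hu.1) h1
    have hlb : ∀ x ∈ {x : ℝ | 0 < P {ω | g (U ω) ≤ x}}, g 0 ≤ x := by
      intro x hx
      by_contra hlt
      push_neg at hlt
      have hempty : {ω | g (U ω) ≤ x} = ∅ := by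
        ext ω
        simp only [mem_setOf_eq, mem_empty_iff_false, iff_false, not_le]
        exact lt_of_lt_of_le hlt (hgm ⟨le_refl 0, zero_le_one⟩ (hUI ω) (hUI ω).1)
      rw [mem_setOf_eq, hempty] at hx
      simp at hx
    apply le_antisymm
    · have hle : ∀ u : ℝ, u ∈ Ioc (0:ℝ) 1 → sInf {x : ℝ | 0 < P {ω | g (U ω) ≤ x}} ≤ g u :=
        fun u hu => csInf_le ⟨g 0, hlb⟩ (hmem u hu)
      refine ge_of_tendsto hgr ?_
      filter_upwards [Ioc_mem_nhdsGT_of_mem (by constructor <;> norm_num : (0:ℝ) ∈ Ico 0 1)]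
        with u hu using hle u hu
    · exact le_csInf ⟨g 1, hmem 1 ⟨zero_lt_one, le_refl 1⟩⟩ hlb
  · -- left quantile
    have hpIoc : p ∈ Ioc (0:ℝ) 1 := ⟨lt_of_le_of_ne hp.1 (Ne.symm hp0), hp.2⟩
    rw [Q_of_ne P hp0]
    unfold leftQuantile
    have hmem : g p ∈ {x : ℝ | ENNReal.ofReal p ≤ P {ω | g (U ω) ≤ x}} := by
      have hsub : {ω | U ω ≤ p} ⊆ {ω | g (U ω) ≤ g p} :=
        fun ω hω => hgm (hUI ω) ⟨hp.1, hp.2⟩ hω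
      rw [mem_setOf_eq, ← hcdf p hp]
      exact measure_mono hsub
    have hlb : ∀ x ∈ {x : ℝ | ENNReal.ofReal p ≤ P {ω | g (U ω) ≤ x}}, g p ≤ x := by
      intro x hx
      by_contra hlt
      push_neg at hlt
      have hev : ∀ᶠ u in nhdsWithin p (Iio p), x < g u :=
        (hgl p hpIoc).eventually (eventually_gt_nhds hlt)
      have hev2 : Ioo (0:ℝ) p ∈ nhdsWithin p (Iio p) :=
        Ioo_mem_nhdsLT hpIoc.1
      obtain ⟨u₀, hu₀g, hu₀⟩ := (hev.and (eventually_of_mem hev2 fun u hu => hu)).exists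
      have hsub : {ω | g (U ω) ≤ x} ⊆ {ω | U ω < u₀} := by
        intro ω hω
        simp only [mem_setOf_eq] at *
        by_contra hge
        push_neg at hge
        have : g u₀ ≤ g (U ω) := hgm ⟨hu₀.1.le, hu₀.2.le.trans hp.2⟩ (hUI ω) hge
        linarith
      have hP1 : P {ω | g (U ω) ≤ x} ≤ ENNReal.ofReal u₀ := by
        have h2 : P {ω | U ω < u₀} ≤ P {ω | U ω ≤ u₀} :=
          measure_mono fun ω hω => (le_of_lt (hω : U ω < u₀) : U ω ≤ u₀)
        exact le_trans (measure_mono hsub)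
          (le_trans h2 (le_of_eq (hcdf u₀ ⟨hu₀.1.le, hu₀.2.le.trans hp.2⟩)))
      have hcon : ENNReal.ofReal p ≤ ENNReal.ofReal u₀ := le_trans hx hP1
      have : ENNReal.ofReal u₀ < ENNReal.ofReal p :=
        (ENNReal.ofReal_lt_ofReal_iff hpIoc.1).mpr hu₀.2
      exact absurd hcon (not_le.mpr this)
    exact le_antisymm (csInf_le ⟨g p, hlb⟩ hmem) (le_csInf ⟨g p, hmem⟩ hlb)

lemma comonotone_comp {X Z : Ω → ℝ} (hcom : ComonotonePair P X Z) {h : ℝ → ℝ}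
    (hm : Monotone h) : ComonotonePair P X (fun ω => h (Z ω)) := by
  filter_upwards [hcom] with w hw
  rcases lt_trichotomy (Z w.1) (Z w.2) with hlt | heq | hgt
  · have hx : X w.1 - X w.2 ≤ 0 := by
      by_contra hX
      push_neg at hX
      have : (X w.1 - X w.2) * (Z w.1 - Z w.2) < 0 :=
        mul_neg_of_pos_of_neg hX (sub_neg.mpr hlt)
      linarith
    have h1 : h (Z w.1) ≤ h (Z w.2) := hm hlt.le
    have := mul_nonneg (neg_nonneg.mpr hx) (neg_nonneg.mpr (sub_nonpos.mpr h1))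
    rw [neg_mul_neg] at this
    exact this
  · rw [heq]
    simp
  · have hx : 0 ≤ X w.1 - X w.2 := by
      by_contra hX
      push_neg at hX
      have : (X w.1 - X w.2) * (Z w.1 - Z w.2) < 0 :=
        mul_neg_of_neg_of_pos hX (sub_pos.mpr hgt)
      linarith
    have h1 : h (Z w.2) ≤ h (Z w.1) := hm hgt.le
    exact mul_nonneg hx (sub_nonneg.mpr h1)

/-- Forward direction: if `f ≾ g` then every `g`-comonotone vector is `f`-comonotone. -/
lemma forward {f g : ℝ → ℝ} (hf : MemG f) (hg : MemG g) (hfg : Prec f g)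
    {d : ℕ} (X : Fin d → Ω → ℝ) (hgc : GComonotone P g X) : GComonotone P f X := by
  obtain ⟨h, hhm, hae⟩ := hfg
  obtain ⟨Z, hZmeas, hQZ, hcom⟩ := hgc
  obtain ⟨hfm, hfr, hfl⟩ := hf
  have hgm := hg.1
  -- good points are dense
  have hgood : ∀ a b : ℝ, 0 ≤ a → a < b → b ≤ 1 → ∃ q, q ∈ Ioo a b ∧ f q = h (g q) := by
    intro a b ha hab hb1
    by_contra hcon
    push_neg at hcon
    have hsub : Ioo a b ⊆ {t | ¬ f t = h (g t)} ∩ Icc 0 1 := by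
      intro t ht
      exact ⟨fun he => hcon t ht he, ⟨ha.trans ht.1.le, ht.2.le.trans hb1⟩⟩
    have h0 : (volume.restrict (Icc (0:ℝ) 1)) {t | ¬ f t = h (g t)} = 0 := ae_iff.mp hae
    rw [Measure.restrict_apply₀' (measurableSet_Icc.nullMeasurableSet)] at h0
    have : volume (Ioo a b) = 0 := le_antisymm (h0 ▸ measure_mono hsub) zero_le
    rw [Real.volume_Ioo] at this
    exact absurd this (by simp [ENNReal.ofReal_eq_zero]; linarith)
  -- clamp
  set c : ℝ → ℝ := fun y => max (g 0) (min y (g 1 + 1)) with hc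
  have hcm : Monotone c := by
    intro y y' hy
    exact max_le_max le_rfl (min_le_min hy le_rfl)
  have hg01 : g 0 ≤ g 1 := hgm ⟨le_refl 0, zero_le_one⟩ ⟨zero_le_one, le_refl 1⟩ zero_le_one
  have hcg : ∀ u ∈ Icc (0:ℝ) 1, c (g u) = g u := by
    intro u hu
    have h1 : g u ≤ g 1 + 1 := by
      have := hgm hu ⟨zero_le_one, le_refl 1⟩ hu.2
      linarith
    have h2 : g 0 ≤ g u := hgm ⟨le_refl 0, zero_le_one⟩ hu hu.1
    simp [hc, min_eq_left h1, max_eq_right h2]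
  set h' : ℝ → ℝ := fun y => h (c y) with hh'
  have hh'm : Monotone h' := fun y y' hy => hhm (hcm hy)
  set Z' : Ω → ℝ := fun ω => h' (Z ω) with hZ'
  have hZ'meas : Measurable Z' := (hh'm.measurable).comp hZmeas
  have hZ'ub : ∀ ω, Z' ω ≤ h (g 1 + 1) := by
    intro ω
    apply hhm
    exact max_le (by linarith) (min_le_right _ _)
  have hZ'lb : ∀ ω, h (g 0) ≤ Z' ω := fun ω => hhm (le_max_left _ _)
  have hgoodval : ∀ q ∈ Icc (0:ℝ) 1, f q = h (g q) → h' (g q) = f q := by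
    intro q hq he
    rw [hh']
    simp only []
    rw [hcg q hq, ← he]
  -- facts about Z from its quantile hypothesis
  have hZQ : ∀ q ∈ Ioo (0:ℝ) 1, sInf {x : ℝ | ENNReal.ofReal q ≤ P {ω | Z ω ≤ x}} = g q := by
    intro q hq
    have := hQZ q ⟨hq.1.le, hq.2.le⟩
    rwa [Q_of_ne P (ne_of_gt hq.1)] at this
  have hZbdd : ∀ q ∈ Ioo (0:ℝ) 1, BddBelow {x : ℝ | ENNReal.ofReal q ≤ P {ω | Z ω ≤ x}} :=
    fun q hq => bddBelow_quantileSet P hZmeas (ENNReal.ofReal_pos.mpr hq.1)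
  have hZne : ∀ q ∈ Ioo (0:ℝ) 1, {x : ℝ | ENNReal.ofReal q ≤ P {ω | Z ω ≤ x}}.Nonempty :=
    fun q hq => nonempty_quantileSet P hZmeas (ENNReal.ofReal_lt_one.mpr hq.2)
  have hcdfZ : ∀ q ∈ Ioo (0:ℝ) 1, ENNReal.ofReal q ≤ P {ω | Z ω ≤ g q} := by
    intro q hq
    have := cdf_csInf P hZmeas (S := {x : ℝ | ENNReal.ofReal q ≤ P {ω | Z ω ≤ x}})
      (fun x hx => hx) (hZne q hq) (hZbdd q hq)
    rwa [hZQ q hq] at this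
  have hcdfZlt : ∀ q ∈ Ioo (0:ℝ) 1, P {ω | Z ω < g q} ≤ ENNReal.ofReal q := by
    intro q hq
    apply meas_lt_le
    intro x hx
    rw [← hZQ q hq] at hx
    have hnotin := notMem_of_lt_csInf hx (hZbdd q hq)
    simp only [mem_setOf_eq, not_le] at hnotin
    exact hnotin.le
  -- the upper bound property
  have hub : ∀ p, 0 < p → p ≤ 1 → ∀ x, ENNReal.ofReal p ≤ P {ω | Z' ω ≤ x} → f p ≤ x := by
    intro p hp0 hp1 x hx
    by_contra hlt
    push_neg at hlt
    -- find a good q < p with x < f q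
    have hev : ∀ᶠ u in nhdsWithin p (Iio p), x < f u :=
      (hfl p ⟨hp0, hp1⟩).eventually (eventually_gt_nhds hlt)
    obtain ⟨a, ha, hIoo⟩ := mem_nhdsLT_iff_exists_Ioo_subset.mp hev
    obtain ⟨q, hqI, hqgood⟩ := hgood (max a 0) p (le_max_right a 0)
      (max_lt ha hp0) hp1
    have hqlt : x < f q := hIoo ⟨lt_of_le_of_lt (le_max_left a 0) hqI.1, hqI.2⟩
    have hq01 : q ∈ Ioo (0:ℝ) 1 := ⟨lt_of_le_of_lt (le_max_right a 0) hqI.1, lt_of_lt_of_le hqI.2 hp1⟩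
    have hfq : h' (g q) = f q := hgoodval q ⟨hq01.1.le, hq01.2.le⟩ hqgood
    have hsub : {ω | Z' ω ≤ x} ⊆ {ω | Z ω < g q} := by
      intro ω hω
      simp only [mem_setOf_eq] at *
      by_contra hge
      push_neg at hge
      have := hh'm hge
      rw [hfq] at this
      linarith
    have hchain : ENNReal.ofReal p ≤ ENNReal.ofReal q :=
      le_trans hx (le_trans (measure_mono hsub) (hcdfZlt q hq01))
    have : ENNReal.ofReal q < ENNReal.ofReal p := (ENNReal.ofReal_lt_ofReal_iff hp0).mpr hqI.2
    exact absurd hchain (not_le.mpr this)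
  -- membership property
  have hmem : ∀ p, 0 < p → p ≤ 1 → ENNReal.ofReal p ≤ P {ω | Z' ω ≤ f p} := by
    intro p hp0 hp1
    set M := P {ω | Z' ω ≤ f p} with hM
    have hMtop : M ≠ ⊤ := measure_ne_top _ _
    rw [ENNReal.ofReal_le_iff_le_toReal hMtop]
    by_contra hcon
    push_neg at hcon
    obtain ⟨q, hqI, hqgood⟩ := hgood (max M.toReal 0) p (le_max_right _ 0)
      (max_lt hcon hp0) hp1
    have hq01 : q ∈ Ioo (0:ℝ) 1 :=
      ⟨lt_of_le_of_lt (le_max_right _ 0) hqI.1, lt_of_lt_of_le hqI.2 hp1⟩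
    have hfq : h' (g q) = f q := hgoodval q ⟨hq01.1.le, hq01.2.le⟩ hqgood
    have hsub : {ω | Z ω ≤ g q} ⊆ {ω | Z' ω ≤ f p} := by
      intro ω hω
      simp only [mem_setOf_eq] at *
      have h1 : Z' ω ≤ h' (g q) := hh'm hω
      rw [hfq] at h1
      exact h1.trans (hfm ⟨hq01.1.le, hq01.2.le⟩ ⟨hp0.le, hp1⟩ hqI.2.le)
    have h2 : ENNReal.ofReal q ≤ M := le_trans (hcdfZ q hq01) (measure_mono hsub)
    rw [ENNReal.ofReal_le_iff_le_toReal hMtop] at h2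
    have := lt_of_le_of_lt (le_max_left M.toReal 0) hqI.1
    linarith
  -- left quantile of Z' equals f on (0,1]
  have hQ' : ∀ p, 0 < p → p ≤ 1 → leftQuantile P Z' p = f p := by
    intro p hp0 hp1
    unfold leftQuantile
    exact le_antisymm (csInf_le ⟨f p, fun x hx => hub p hp0 hp1 x hx⟩ (hmem p hp0 hp1))
      (le_csInf ⟨f p, hmem p hp0 hp1⟩ (fun x hx => hub p hp0 hp1 x hx))
  -- right quantile of Z' at 0 equals f 0
  have hQ'0 : rightQuantile P Z' 0 = f 0 := by
    unfold rightQuantile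
    rw [show ENNReal.ofReal 0 = 0 by simp]
    have hT1 : h (g 1 + 1) ∈ {x : ℝ | 0 < P {ω | Z' ω ≤ x}} := by
      have : {ω | Z' ω ≤ h (g 1 + 1)} = univ := eq_univ_of_forall fun ω => hZ'ub ω
      simp [this]
    have hTlb : ∀ x ∈ {x : ℝ | 0 < P {ω | Z' ω ≤ x}}, f 0 ≤ x := by
      intro x hx
      simp only [mem_setOf_eq] at hx
      set M := P {ω | Z' ω ≤ x} with hM
      have hMtop : M ≠ ⊤ := measure_ne_top _ _
      have hMpos : 0 < M.toReal := ENNReal.toReal_pos (ne_of_gt hx) hMtop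
      set p₀ := min M.toReal 1 with hp₀
      have hp₀0 : 0 < p₀ := lt_min hMpos zero_lt_one
      have hp₀1 : p₀ ≤ 1 := min_le_right _ _
      have hle : ENNReal.ofReal p₀ ≤ M := by
        rw [ENNReal.ofReal_le_iff_le_toReal hMtop]
        exact min_le_left _ _
      exact le_trans (hfm ⟨le_refl 0, zero_le_one⟩ ⟨hp₀0.le, hp₀1⟩ hp₀0.le)
        (hub p₀ hp₀0 hp₀1 x hle)
    apply le_antisymm
    · -- sInf T ≤ f p for all p ∈ (0,1], then limit
      have key : ∀ p, 0 < p → p ≤ 1 → sInf {x : ℝ | 0 < P {ω | Z' ω ≤ x}} ≤ f p := by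
        intro p hp0 hp1
        apply csInf_le ⟨f 0, hTlb⟩
        simp only [mem_setOf_eq]
        have hne : {x : ℝ | ENNReal.ofReal p ≤ P {ω | Z' ω ≤ x}}.Nonempty := ⟨f p, hmem p hp0 hp1⟩
        have hbd : BddBelow {x : ℝ | ENNReal.ofReal p ≤ P {ω | Z' ω ≤ x}} :=
          ⟨f p, fun x hx => hub p hp0 hp1 x hx⟩
        have := cdf_csInf P hZ'meas (S := {x : ℝ | ENNReal.ofReal p ≤ P {ω | Z' ω ≤ x}})
          (fun x hx => hx) hne hbd
        have heq : sInf {x : ℝ | ENNReal.ofReal p ≤ P {ω | Z' ω ≤ x}} = f p := hQ' p hp0 hp1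
        rw [heq] at this
        exact lt_of_lt_of_le (ENNReal.ofReal_pos.mpr hp0) this
      refine ge_of_tendsto hfr ?_
      filter_upwards [Ioc_mem_nhdsGT_of_mem (by constructor <;> norm_num : (0:ℝ) ∈ Ico 0 1)]
        with u hu using key u hu.1 hu.2
    · exact le_csInf ⟨_, hT1⟩ hTlb
  refine ⟨Z', hZ'meas, fun p hp => ?_, fun i => comonotone_comp P (hcom i) hh'm⟩
  by_cases hp0 : p = 0
  · subst hp0
    simpa [Q] using hQ'0
  · rw [Q_of_ne P hp0]
    exact hQ' p (lt_of_le_of_ne hp.1 (Ne.symm hp0)) hp.2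

/-- If `f` is constant (from the right) on constancy intervals of `g`, then `f ≾ g`. -/
lemma c_to_prec {f g : ℝ → ℝ} (hf : MemG f) (hg : MemG g)
    (hC : ∀ s t r : ℝ, 0 < s → s < r → r ≤ t → t ≤ 1 → g s = g t → f r = f t) :
    Prec f g := by
  obtain ⟨hfm, hfr, hfl⟩ := hf
  have hgm := hg.1
  classical
  set h : ℝ → ℝ := fun y => sSup (insert (f 0) (f '' {u | u ∈ Ioo (0:ℝ) 1 ∧ g u ≤ y})) with hh
  have hbdd : ∀ y, BddAbove (insert (f 0) (f '' {u | u ∈ Ioo (0:ℝ) 1 ∧ g u ≤ y})) := by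
    intro y
    refine ⟨f 1, ?_⟩
    rintro x (rfl | ⟨u, hu, rfl⟩)
    · exact hfm ⟨le_refl 0, zero_le_one⟩ ⟨zero_le_one, le_refl 1⟩ zero_le_one
    · exact hfm ⟨hu.1.1.le, hu.1.2.le⟩ ⟨zero_le_one, le_refl 1⟩ hu.1.2.le
  have hmono : Monotone h := by
    intro y y' hy
    apply csSup_le_csSup (hbdd y') ⟨f 0, mem_insert _ _⟩
    rintro x (rfl | ⟨u, hu, rfl⟩)
    · exact mem_insert _ _
    · exact mem_insert_of_mem _ ⟨u, ⟨hu.1, hu.2.trans hy⟩, rfl⟩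
  -- bad points
  set Bad : Set ℝ := {t | t ∈ Ioo (0:ℝ) 1 ∧ ∃ u, u ∈ Ioo (0:ℝ) 1 ∧ g u ≤ g t ∧ f t < f u}
    with hBad
  -- good points give equality
  have hgoodeq : ∀ t, t ∈ Ioo (0:ℝ) 1 → t ∉ Bad → f t = h (g t) := by
    intro t ht htb
    have hub : ∀ x ∈ insert (f 0) (f '' {u | u ∈ Ioo (0:ℝ) 1 ∧ g u ≤ g t}), x ≤ f t := by
      rintro x (rfl | ⟨u, hu, rfl⟩)
      · exact hfm ⟨le_refl 0, zero_le_one⟩ ⟨ht.1.le, ht.2.le⟩ ht.1.le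
      · by_contra hlt
        push_neg at hlt
        exact htb ⟨ht, u, hu.1, hu.2, hlt⟩
    have hmem : f t ∈ insert (f 0) (f '' {u | u ∈ Ioo (0:ℝ) 1 ∧ g u ≤ g t}) :=
      mem_insert_of_mem _ ⟨t, ⟨ht, le_refl _⟩, rfl⟩
    exact (le_antisymm (csSup_le ⟨f t, hmem⟩ hub) (le_csSup (hbdd _) hmem)).symm
  -- structure of bad points
  have hbadstruct : ∀ t ∈ Bad, ∃ u, t < u ∧ u < 1 ∧ f t < f u ∧
      ∀ r, t < r → r ≤ u → f r = f u := by
    rintro t ⟨ht, u, hu, hgu, hfu⟩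
    have htu : t < u := by
      by_contra hle
      push_neg at hle
      exact absurd (hfm ⟨hu.1.le, hu.2.le⟩ ⟨ht.1.le, ht.2.le⟩ hle) (not_le.mpr hfu)
    have hgeq : g t = g u :=
      le_antisymm (hgm ⟨ht.1.le, ht.2.le⟩ ⟨hu.1.le, hu.2.le⟩ htu.le) hgu
    exact ⟨u, htu, hu.2, hfu, fun r hr1 hr2 => hC t u r ht.1 hr1 hr2 hu.2.le hgeq⟩
  -- bad is countable
  have hcount : Bad.Countable := by
    have hchoice : ∀ t ∈ Bad, ∃ q : ℚ, t < (q:ℝ) ∧ ∃ u, t < u ∧ u < 1 ∧ f t < f u ∧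
        (q:ℝ) ≤ u ∧ ∀ r, t < r → r ≤ u → f r = f u := by
      intro t ht
      obtain ⟨u, htu, hu1, hfu, hconst⟩ := hbadstruct t ht
      obtain ⟨q, hq1, hq2⟩ := exists_rat_btwn htu
      exact ⟨q, hq1, u, htu, hu1, hfu, hq2.le, hconst⟩
    choose! φ hφ using hchoice
    rw [Set.countable_iff_exists_injOn]
    refine ⟨fun t => Encodable.encode (φ t), fun t₁ h₁ t₂ h₂ he => ?_⟩
    have heq : φ t₁ = φ t₂ := Encodable.encode_injective he
    by_contra hne
    wlog hlt : t₁ < t₂ generalizing t₁ t₂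
    · exact this t₂ h₂ t₁ h₁ he.symm heq.symm (Ne.symm hne) (lt_of_le_of_ne (not_lt.mp hlt) (Ne.symm hne))
    obtain ⟨hq1, u₁, ht₁u, hu₁1, hf₁, hqu₁, hconst₁⟩ := hφ t₁ h₁
    obtain ⟨hq2, u₂, ht₂u, hu₂1, hf₂, hqu₂, hconst₂⟩ := hφ t₂ h₂
    rw [heq] at hq1 hqu₁
    -- t₁ < t₂ < φ t₂ ≤ u₁, so f t₂ = f u₁ and f (φ t₂) = f u₁ = f u₂
    have h1 : f t₂ = f u₁ := hconst₁ t₂ (by linarith [hq2]) (by linarith)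
    have h2 : f ((φ t₂ : ℚ) : ℝ) = f u₁ := hconst₁ _ (by linarith) hqu₁
    have h3 : f ((φ t₂ : ℚ) : ℝ) = f u₂ := hconst₂ _ hq2 hqu₂
    have h4 : f t₂ = f u₂ := by rw [h1, ← h2, h3]
    exact absurd h4 (ne_of_lt hf₂)
  -- conclude
  refine ⟨h, hmono, ?_⟩
  rw [ae_iff]
  have hsub : {t | ¬ f t = h (g t)} ∩ Icc 0 1 ⊆ Bad ∪ {0, 1} := by
    rintro t ⟨htne, ht0, ht1⟩
    rcases eq_or_lt_of_le ht0 with rfl | ht0'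
    · exact Or.inr (Or.inl rfl)
    rcases eq_or_lt_of_le ht1 with rfl | ht1'
    · exact Or.inr (Or.inr rfl)
    by_contra hcon
    exact htne (hgoodeq t ⟨ht0', ht1'⟩ (fun hb => (hcon (Or.inl hb)).elim))
  have hz : volume (Bad ∪ {0, 1} : Set ℝ) = 0 :=
    Set.Countable.measure_zero (hcount.union (by simp [Set.countable_insert,
      Set.countable_singleton])) _
  rw [Measure.restrict_apply' measurableSet_Icc]
  exact le_antisymm (hz ▸ measure_mono hsub) zero_le

lemma comonotone_null {X Z : Ω → ℝ} (hcom : ComonotonePair P X Z) {B C : Set Ω}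
    (hneg : ∀ ω ∈ B, ∀ ω' ∈ C, (X ω - X ω') * (Z ω - Z ω') < 0) :
    P B = 0 ∨ P C = 0 := by
  by_contra hcon
  push_neg at hcon
  have hBC : (P.prod P) (B ×ˢ C) = P B * P C := Measure.prod_prod B C
  have hsub : B ×ˢ C ⊆ {w : Ω × Ω | ¬ 0 ≤ (X w.1 - X w.2) * (Z w.1 - Z w.2)} := by
    rintro ⟨ω, ω'⟩ ⟨hω, hω'⟩
    exact not_le.mpr (hneg ω hω ω' hω')
  have hz : (P.prod P) {w : Ω × Ω | ¬ 0 ≤ (X w.1 - X w.2) * (Z w.1 - Z w.2)} = 0 :=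
    ae_iff.mp hcom
  have : (P.prod P) (B ×ˢ C) = 0 := le_antisymm (hz ▸ measure_mono hsub) zero_le
  rw [hBC] at this
  rcases mul_eq_zero.mp this with h | h
  · exact hcon.1 h
  · exact hcon.2 h

/-- Quantile facts at interior points. -/
lemma quantile_facts {Z : Ω → ℝ} (hZmeas : Measurable Z) {g : ℝ → ℝ}
    (hQZ : ∀ p ∈ Icc (0:ℝ) 1, Q P Z p = g p) {q : ℝ} (hq : q ∈ Ioo (0:ℝ) 1) :
    ENNReal.ofReal q ≤ P {ω | Z ω ≤ g q} ∧ P {ω | Z ω < g q} ≤ ENNReal.ofReal q := by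
  have hZQ : sInf {x : ℝ | ENNReal.ofReal q ≤ P {ω | Z ω ≤ x}} = g q := by
    have := hQZ q ⟨hq.1.le, hq.2.le⟩
    rwa [Q_of_ne P (ne_of_gt hq.1)] at this
  have hbdd : BddBelow {x : ℝ | ENNReal.ofReal q ≤ P {ω | Z ω ≤ x}} :=
    bddBelow_quantileSet P hZmeas (ENNReal.ofReal_pos.mpr hq.1)
  have hne : {x : ℝ | ENNReal.ofReal q ≤ P {ω | Z ω ≤ x}}.Nonempty :=
    nonempty_quantileSet P hZmeas (ENNReal.ofReal_lt_one.mpr hq.2)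
  constructor
  · have := cdf_csInf P hZmeas (S := {x : ℝ | ENNReal.ofReal q ≤ P {ω | Z ω ≤ x}})
      (fun x hx => hx) hne hbdd
    rwa [hZQ] at this
  · apply meas_lt_le
    intro x hx
    rw [← hZQ] at hx
    have hnotin := notMem_of_lt_csInf hx hbdd
    simp only [mem_setOf_eq, not_le] at hnotin
    exact hnotin.le

/-- `P(A ∩ B) ≥ P B - P Aᶜ` in the form we need. -/
lemma meas_inter_pos {A B : Set Ω} (hA : MeasurableSet A)
    (h : P Aᶜ < P B) : 0 < P (A ∩ B) := by
  by_contra hcon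
  push_neg at hcon
  have h0 : P (A ∩ B) = 0 := le_antisymm hcon zero_le
  have hsub : B ⊆ (A ∩ B) ∪ Aᶜ := by
    intro ω hω
    by_cases hωA : ω ∈ A
    · exact Or.inl ⟨hωA, hω⟩
    · exact Or.inr hωA
  have : P B ≤ P (A ∩ B) + P Aᶜ := le_trans (measure_mono hsub) (measure_union_le _ _)
  rw [h0, zero_add] at this
  exact absurd this (not_le.mpr h)

/-- Comonotonicity with a uniform random variable pins down the variable a.s. -/
lemma comonotone_uniform_ae {U Z' : Ω → ℝ} (hU : Measurable U) (hZ'meas : Measurable Z')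
    (hUI : ∀ ω, U ω ∈ Icc (0:ℝ) 1)
    (hcdf : ∀ x ∈ Icc (0:ℝ) 1, P {ω | U ω ≤ x} = ENNReal.ofReal x)
    {f : ℝ → ℝ} (hf : MemG f)
    (hQ : ∀ p ∈ Icc (0:ℝ) 1, Q P Z' p = f p)
    (hcom : ComonotonePair P U Z') :
    ∀ᵐ ω ∂P, Z' ω = f (U ω) ∧ U ω ∈ Ioo (0:ℝ) 1 := by
  obtain ⟨hfm, hfr, hfl⟩ := hf
  have hcdf' : ∀ x : ℝ, x ≤ 1 → P {ω | U ω ≤ x} = ENNReal.ofReal x := by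
    intro x hx
    rcases le_or_gt 0 x with h0 | h0
    · exact hcdf x ⟨h0, hx⟩
    · have : {ω | U ω ≤ x} = ∅ := by
        ext ω
        simp only [mem_setOf_eq, mem_empty_iff_false, iff_false, not_le]
        exact lt_of_lt_of_le h0 (hUI ω).1
      rw [this, measure_empty, ENNReal.ofReal_of_nonpos h0.le]
  -- P(U < x) = ofReal x for x ≤ 1
  have hcdflt : ∀ x : ℝ, x ≤ 1 → P {ω | U ω < x} = ENNReal.ofReal x := by
    intro x hx
    apply le_antisymm
    · refine le_trans (measure_mono fun ω (hω : U ω < x) => hω.le) (le_of_eq (hcdf' x hx))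
    · have key : ∀ n : ℕ, ENNReal.ofReal (x - 1/(n+1:ℝ)) ≤ P {ω | U ω < x} := by
        intro n
        have hpos : (0:ℝ) < 1/(n+1:ℝ) := by positivity
        refine le_trans (le_of_eq (hcdf' (x - 1/(n+1:ℝ)) (by linarith)).symm) ?_
        exact measure_mono fun ω (hω : U ω ≤ x - 1/(n+1:ℝ)) => lt_of_le_of_lt hω (by linarith)
      have htend : Tendsto (fun n : ℕ => ENNReal.ofReal (x - 1/(n+1:ℝ))) atTop
          (nhds (ENNReal.ofReal x)) := by
        apply ENNReal.tendsto_ofReal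
        have h1 : Tendsto (fun n : ℕ => 1/(n+1:ℝ)) atTop (nhds 0) :=
          tendsto_one_div_add_atTop_nhds_zero_nat
        have := (tendsto_const_nhds (x := x) (f := atTop (α := ℕ))).sub h1
        simpa using this
      exact le_of_tendsto htend (Eventually.of_forall key)
  -- atoms of U are null
  have hatom : ∀ p : ℝ, p ≤ 1 → P {ω | U ω = p} = 0 := by
    intro p hp
    have hsub : {ω | U ω = p} ⊆ {ω | U ω ≤ p} \ {ω | U ω < p} := by
      intro ω hω
      simp only [mem_setOf_eq, mem_diff] at *
      exact ⟨hω.le, by rw [hω]; exact lt_irrefl p⟩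
    have hd : P ({ω | U ω ≤ p} \ {ω | U ω < p}) =
        P {ω | U ω ≤ p} - P {ω | U ω < p} :=
      measure_diff (fun ω (hω : U ω < p) => hω.le) (hU measurableSet_Iio).nullMeasurableSet
        (measure_ne_top _ _)
    have : P {ω | U ω = p} ≤ P {ω | U ω ≤ p} - P {ω | U ω < p} :=
      hd ▸ measure_mono hsub
    rw [hcdf' p hp, hcdflt p hp, tsub_self] at this
    exact le_antisymm this zero_le
  -- U lands in (0,1) a.s.
  have hU01 : P {ω | U ω ∉ Ioo (0:ℝ) 1} = 0 := by
    have hsub : {ω | U ω ∉ Ioo (0:ℝ) 1} ⊆ {ω | U ω ≤ 0} ∪ {ω | U ω = 1} := by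
      intro ω hω
      simp only [mem_setOf_eq, mem_Ioo, not_and, not_lt, mem_union] at *
      rcases le_or_gt (U ω) 0 with h | h
      · exact Or.inl h
      · exact Or.inr (le_antisymm (hUI ω).2 (hω h))
    refine le_antisymm (le_trans (measure_mono hsub) ?_) zero_le
    refine le_trans (measure_union_le _ _) ?_
    rw [hcdf' 0 zero_le_one, hatom 1 le_rfl]
    simp
  -- claim U1: can't be below q' while Z' above f q
  have hU1 : ∀ q' q : ℝ, 0 < q' → q' < q → q < 1 →
      P ({ω | U ω < q'} ∩ {ω | f q < Z' ω}) = 0 := by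
    intro q' q h0 hq'q hq1
    have hq01 : q ∈ Ioo (0:ℝ) 1 := ⟨h0.trans hq'q, hq1⟩
    have hfacts := quantile_facts P hZ'meas hQ hq01
    have hC : 0 < P ({ω | q' ≤ U ω} ∩ {ω | Z' ω ≤ f q}) := by
      refine meas_inter_pos P (A := {ω | q' ≤ U ω}) (B := {ω | Z' ω ≤ f q})
        (show MeasurableSet {ω | q' ≤ U ω} from hU measurableSet_Ici) ?_
      have hce : ({ω | q' ≤ U ω} : Set Ω)ᶜ = {ω | U ω < q'} := by
        ext ω; simp [not_le]
      rw [hce, hcdflt q' (by linarith)]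
      exact lt_of_lt_of_le ((ENNReal.ofReal_lt_ofReal_iff (h0.trans hq'q)).mpr hq'q) hfacts.1
    have hneg : ∀ ω ∈ ({ω | U ω < q'} ∩ {ω | f q < Z' ω}),
        ∀ ω' ∈ ({ω | q' ≤ U ω} ∩ {ω | Z' ω ≤ f q}),
        (U ω - U ω') * (Z' ω - Z' ω') < 0 := by
      rintro ω ⟨hω1, hω2⟩ ω' ⟨hω'1, hω'2⟩
      simp only [mem_setOf_eq] at *
      apply mul_neg_of_neg_of_pos
      · linarith
      · linarith
    rcases comonotone_null P hcom hneg with h | h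
    · exact h
    · exact absurd h (ne_of_gt hC)
  -- claim U2: can't be above q'' while Z' below f q
  have hU2 : ∀ q q'' : ℝ, 0 < q → q < q'' → q'' < 1 →
      P ({ω | q'' < U ω} ∩ {ω | Z' ω < f q}) = 0 := by
    intro q q'' h0 hqq hq1
    set q3 := (q + q'')/2 with hq3
    have hq3a : q < q3 := by rw [hq3]; linarith
    have hq3b : q3 < q'' := by rw [hq3]; linarith
    have hq01 : q ∈ Ioo (0:ℝ) 1 := ⟨h0, hqq.trans hq1⟩
    have hfacts := quantile_facts P hZ'meas hQ hq01
    have hC : 0 < P ({ω | U ω ≤ q3} ∩ {ω | f q ≤ Z' ω}) := by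
      refine meas_inter_pos P (A := {ω | U ω ≤ q3}) (B := {ω | f q ≤ Z' ω})
        (show MeasurableSet {ω | U ω ≤ q3} from hU measurableSet_Iic) ?_
      have hce : ({ω | U ω ≤ q3} : Set Ω)ᶜ = {ω | q3 < U ω} := by
        ext ω; simp [not_le]
      have h1 : P {ω | q3 < U ω} = 1 - ENNReal.ofReal q3 := by
        rw [← hce, measure_compl (show MeasurableSet {ω | U ω ≤ q3} from hU measurableSet_Iic)
          (measure_ne_top _ _), measure_univ, hcdf' q3 (by linarith)]
      have h2 : ({ω | f q ≤ Z' ω} : Set Ω) = {ω | Z' ω < f q}ᶜ := by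
        ext ω; simp [not_lt]
      have h3 : (1:ENNReal) - ENNReal.ofReal q ≤ P {ω | f q ≤ Z' ω} := by
        rw [h2, measure_compl (show MeasurableSet {ω | Z' ω < f q} from hZ'meas measurableSet_Iio)
          (measure_ne_top _ _), measure_univ]
        exact tsub_le_tsub_left hfacts.2 1
      rw [hce, h1]
      refine lt_of_lt_of_le ?_ h3
      have e1 : (1:ENNReal) - ENNReal.ofReal q3 = ENNReal.ofReal (1 - q3) := by
        rw [← ENNReal.ofReal_one, ← ENNReal.ofReal_sub _ (by linarith)]
      have e2 : (1:ENNReal) - ENNReal.ofReal q = ENNReal.ofReal (1 - q) := by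
        rw [← ENNReal.ofReal_one, ← ENNReal.ofReal_sub _ (by linarith)]
      rw [e1, e2]
      exact (ENNReal.ofReal_lt_ofReal_iff (by linarith)).mpr (by linarith)
    have hneg : ∀ ω ∈ ({ω | q'' < U ω} ∩ {ω | Z' ω < f q}),
        ∀ ω' ∈ ({ω | U ω ≤ q3} ∩ {ω | f q ≤ Z' ω}),
        (U ω - U ω') * (Z' ω - Z' ω') < 0 := by
      rintro ω ⟨hω1, hω2⟩ ω' ⟨hω'1, hω'2⟩
      simp only [mem_setOf_eq] at *
      apply mul_neg_of_pos_of_neg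
      · linarith
      · linarith
    rcases comonotone_null P hcom hneg with h | h
    · exact h
    · exact absurd h (ne_of_gt hC)
  -- rational unions
  set B1 : ℚ × ℚ → Set Ω := fun r =>
    {ω | (0 < (r.1:ℝ) ∧ (r.1:ℝ) < (r.2:ℝ) ∧ (r.2:ℝ) < 1) ∧ U ω < (r.1:ℝ) ∧ f (r.2:ℝ) < Z' ω}
    with hB1
  set B2 : ℚ × ℚ → Set Ω := fun r =>
    {ω | (0 < (r.1:ℝ) ∧ (r.1:ℝ) < (r.2:ℝ) ∧ (r.2:ℝ) < 1) ∧ (r.2:ℝ) < U ω ∧ Z' ω < f (r.1:ℝ)}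
    with hB2
  have hN1 : P (⋃ r : ℚ × ℚ, B1 r) = 0 := by
    rw [measure_iUnion_null_iff]
    intro r
    by_cases hc : (0 < (r.1:ℝ) ∧ (r.1:ℝ) < (r.2:ℝ) ∧ (r.2:ℝ) < 1)
    · refine le_antisymm (le_trans (measure_mono ?_) (le_of_eq (hU1 r.1 r.2 hc.1 hc.2.1 hc.2.2))) zero_le
      rintro ω ⟨_, h1, h2⟩
      exact ⟨h1, h2⟩
    · have : B1 r = ∅ := by
        rw [hB1]
        ext ω
        simp only [mem_setOf_eq, mem_empty_iff_false, iff_false]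
        rintro ⟨hcc, _⟩
        exact hc hcc
      simp [this]
  have hN2 : P (⋃ r : ℚ × ℚ, B2 r) = 0 := by
    rw [measure_iUnion_null_iff]
    intro r
    by_cases hc : (0 < (r.1:ℝ) ∧ (r.1:ℝ) < (r.2:ℝ) ∧ (r.2:ℝ) < 1)
    · refine le_antisymm (le_trans (measure_mono ?_) (le_of_eq (hU2 r.1 r.2 hc.1 hc.2.1 hc.2.2))) zero_le
      rintro ω ⟨_, h1, h2⟩
      exact ⟨h1, h2⟩
    · have : B2 r = ∅ := by
        rw [hB2]
        ext ω
        simp only [mem_setOf_eq, mem_empty_iff_false, iff_false]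
        rintro ⟨hcc, _⟩
        exact hc hcc
      simp [this]
  -- the set of right-jumps of f is countable and U-null
  set J : Set ℝ := {p | p ∈ Ioo (0:ℝ) 1 ∧ ∃ ε : ℝ, 0 < ε ∧ ∀ v, p < v → v < 1 → f p + ε ≤ f v}
    with hJ
  have hJc : J.Countable := by
    have hchoice : ∀ p ∈ J, ∃ q : ℚ, f p < (q:ℝ) ∧ ∀ v, p < v → v < 1 → (q:ℝ) ≤ f v := by
      rintro p ⟨hp, ε, hε, hεv⟩
      obtain ⟨q, hq1, hq2⟩ := exists_rat_btwn (show f p < f p + ε by linarith)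
      exact ⟨q, hq1, fun v hv1 hv2 => le_trans hq2.le (hεv v hv1 hv2)⟩
    choose! ψ hψ using hchoice
    rw [Set.countable_iff_exists_injOn]
    refine ⟨fun p => Encodable.encode (ψ p), fun p₁ h₁ p₂ h₂ he => ?_⟩
    have heq : ψ p₁ = ψ p₂ := Encodable.encode_injective he
    by_contra hne
    wlog hlt : p₁ < p₂ generalizing p₁ p₂
    · exact this p₂ h₂ p₁ h₁ he.symm heq.symm (Ne.symm hne)
        (lt_of_le_of_ne (not_lt.mp hlt) (Ne.symm hne))
    obtain ⟨ha1, ha2⟩ := hψ p₁ h₁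
    obtain ⟨hb1, hb2⟩ := hψ p₂ h₂
    have h3 : ((ψ p₁ : ℚ) : ℝ) ≤ f p₂ := ha2 p₂ hlt h₂.1.2
    rw [heq] at h3
    linarith
  have hUJ : P {ω | U ω ∈ J} = 0 := by
    have he : {ω | U ω ∈ J} = ⋃ p ∈ J, {ω | U ω = p} := by
      ext ω
      simp only [mem_setOf_eq, mem_iUnion, exists_prop]
      exact ⟨fun h => ⟨U ω, h, rfl⟩, fun ⟨p, hp, hup⟩ => hup ▸ hp⟩
    rw [he, measure_biUnion_null_iff hJc]
    intro p hp
    exact hatom p hp.1.2.le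
  -- assemble
  rw [show (fun ω => Z' ω = f (U ω) ∧ U ω ∈ Ioo (0:ℝ) 1) = fun ω => ω ∈
    {ω | Z' ω = f (U ω) ∧ U ω ∈ Ioo (0:ℝ) 1} from rfl]
  have h1 := measure_eq_zero_iff_ae_notMem.mp hN1
  have h2 := measure_eq_zero_iff_ae_notMem.mp hN2
  have h3 := measure_eq_zero_iff_ae_notMem.mp hU01
  have h4 := measure_eq_zero_iff_ae_notMem.mp hUJ
  filter_upwards [h1, h2, h3, h4] with ω hω1 hω2 hω3 hω4
  have hUIoo : U ω ∈ Ioo (0:ℝ) 1 := by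
    by_contra hcon
    exact hω3 hcon
  have hUJω : U ω ∉ J := fun hin => hω4 hin
  refine ⟨?_, hUIoo⟩
  have hle : Z' ω ≤ f (U ω) := by
    by_contra hgt
    push_neg at hgt
    have hnotJ : ¬ ∃ ε : ℝ, 0 < ε ∧ ∀ v, U ω < v → v < 1 → f (U ω) + ε ≤ f v := by
      intro hex
      exact hUJω ⟨hUIoo, hex⟩
    push_neg at hnotJ
    obtain ⟨v, hv1, hv2, hv3⟩ := hnotJ (Z' ω - f (U ω)) (by linarith)
    obtain ⟨q, hq1, hq2⟩ := exists_rat_btwn hv1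
    obtain ⟨q', hq'1, hq'2⟩ := exists_rat_btwn hq1
    have hfq : f (q:ℝ) ≤ f v := by
      apply hfm ⟨(hUIoo.1.trans hq1).le, (hq2.trans hv2).le⟩
        ⟨(hUIoo.1.trans hv1).le, hv2.le⟩ hq2.le
    apply hω1
    refine mem_iUnion.mpr ⟨(q', q), ?_⟩
    rw [hB1]
    refine ⟨⟨hUIoo.1.trans hq'1, by exact_mod_cast hq'2, hq2.trans hv2⟩, hq'1, ?_⟩
    simp only [mem_setOf_eq]
    linarith
  have hge : f (U ω) ≤ Z' ω := by
    by_contra hlt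
    push_neg at hlt
    have hev : ∀ᶠ u in nhdsWithin (U ω) (Iio (U ω)), Z' ω < f u :=
      (hfl (U ω) ⟨hUIoo.1, hUIoo.2.le⟩).eventually (eventually_gt_nhds hlt)
    obtain ⟨a, ha, hsub⟩ := mem_nhdsLT_iff_exists_Ioo_subset.mp hev
    obtain ⟨q, hq1, hq2⟩ := exists_rat_btwn (max_lt ha hUIoo.1)
    obtain ⟨q'', hq''1, hq''2⟩ := exists_rat_btwn hq2
    have hfq : Z' ω < f (q:ℝ) := hsub ⟨lt_of_le_of_lt (le_max_left a 0) hq1, hq2⟩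
    apply hω2
    refine mem_iUnion.mpr ⟨(q, q''), ?_⟩
    rw [hB2]
    refine ⟨⟨lt_of_le_of_lt (le_max_right a 0) hq1, by exact_mod_cast hq''1,
      hq''2.trans hUIoo.2⟩, hq''2, hfq⟩
  exact le_antisymm hle hge

lemma uniform_cdf_ext {U : Ω → ℝ} (hUI : ∀ ω, U ω ∈ Icc (0:ℝ) 1)
    (hcdf : ∀ x ∈ Icc (0:ℝ) 1, P {ω | U ω ≤ x} = ENNReal.ofReal x) :
    ∀ x : ℝ, x ≤ 1 → P {ω | U ω ≤ x} = ENNReal.ofReal x := by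
  intro x hx
  rcases le_or_gt 0 x with h0 | h0
  · exact hcdf x ⟨h0, hx⟩
  · have : {ω | U ω ≤ x} = ∅ := by
      ext ω
      simp only [mem_setOf_eq, mem_empty_iff_false, iff_false, not_le]
      exact lt_of_lt_of_le h0 (hUI ω).1
    rw [this, measure_empty, ENNReal.ofReal_of_nonpos h0.le]

lemma uniform_cdf_lt {U : Ω → ℝ} (hUI : ∀ ω, U ω ∈ Icc (0:ℝ) 1)
    (hcdf : ∀ x ∈ Icc (0:ℝ) 1, P {ω | U ω ≤ x} = ENNReal.ofReal x) :
    ∀ x : ℝ, x ≤ 1 → P {ω | U ω < x} = ENNReal.ofReal x := by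
  have hcdf' := uniform_cdf_ext P hUI hcdf
  intro x hx
  apply le_antisymm
  · exact le_trans (measure_mono fun ω (hω : U ω < x) => hω.le) (le_of_eq (hcdf' x hx))
  · have key : ∀ n : ℕ, ENNReal.ofReal (x - 1/(n+1:ℝ)) ≤ P {ω | U ω < x} := by
      intro n
      have hpos : (0:ℝ) < 1/(n+1:ℝ) := by positivity
      refine le_trans (le_of_eq (hcdf' (x - 1/(n+1:ℝ)) (by linarith)).symm) ?_
      exact measure_mono fun ω (hω : U ω ≤ x - 1/(n+1:ℝ)) => lt_of_le_of_lt hω (by linarith)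
    have htend : Tendsto (fun n : ℕ => ENNReal.ofReal (x - 1/(n+1:ℝ))) atTop
        (nhds (ENNReal.ofReal x)) := by
      apply ENNReal.tendsto_ofReal
      have h1 : Tendsto (fun n : ℕ => 1/(n+1:ℝ)) atTop (nhds 0) :=
        tendsto_one_div_add_atTop_nhds_zero_nat
      have := (tendsto_const_nhds (x := x) (f := atTop (α := ℕ))).sub h1
      simpa using this
    exact le_of_tendsto htend (Eventually.of_forall key)

lemma uniform_Ioo_pos {U : Ω → ℝ} (hU : Measurable U) (hUI : ∀ ω, U ω ∈ Icc (0:ℝ) 1)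
    (hcdf : ∀ x ∈ Icc (0:ℝ) 1, P {ω | U ω ≤ x} = ENNReal.ofReal x)
    {a b : ℝ} (hab : a < b) (ha : 0 ≤ a) (hb : b ≤ 1) :
    ENNReal.ofReal (b - a) ≤ P {ω | U ω ∈ Ioo a b} := by
  have h1 : {ω | U ω ∈ Ioo a b} = {ω | U ω < b} \ {ω | U ω ≤ a} := by
    ext ω
    simp only [mem_setOf_eq, mem_Ioo, mem_diff, not_le]
    tauto
  have h2 : P ({ω | U ω < b} \ {ω | U ω ≤ a}) = P {ω | U ω < b} - P {ω | U ω ≤ a} := by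
    apply measure_diff (fun ω (hω : U ω ≤ a) => lt_of_le_of_lt hω hab)
      (hU measurableSet_Iic).nullMeasurableSet (measure_ne_top _ _)
  rw [h1, h2, uniform_cdf_lt P hUI hcdf b hb, uniform_cdf_ext P hUI hcdf a (le_trans hab.le hb),
    ← ENNReal.ofReal_sub _ ha]

end St6






/-- For `f, g ∈ 𝒢`, `f ≾ g` iff every `g`-comonotonic random vector is
`f`-comonotonic. -/
theorem stmt_6 {Ω : Type*} [MeasurableSpace Ω] (P : MeasureTheory.Measure Ω)
    [MeasureTheory.IsProbabilityMeasure P] (hP : Atomless P)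
    (f g : ℝ → ℝ) (hf : MemG f) (hg : MemG g) :
    Prec f g ↔
      ∀ (d : ℕ) (X : Fin d → Ω → ℝ), (∀ i, Measurable (X i)) →
        GComonotone P g X → GComonotone P f X := by
  constructor
  · intro hfg d X hX hgc
    exact St6.forward P hf hg hfg X hgc
  · intro hR
    apply St6.c_to_prec hf hg
    intro s t r hs hsr hrt ht1 hgst
    by_contra hne
    have hfm := hf.1
    have hfl := hf.2.2
    have hgm := hg.1
    have h0t : 0 < t := hs.trans (hsr.trans_le hrt)
    have hr1 : r ≤ 1 := hrt.trans ht1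
    have hs1 : s ≤ 1 := hsr.le.trans hr1
    have hflt : f r < f t :=
      lt_of_le_of_ne (hfm ⟨(hs.trans hsr).le, hr1⟩ ⟨h0t.le, ht1⟩ hrt) hne
    have hrt' : r < t := lt_of_le_of_ne hrt (fun he => hne (by rw [he]))
    -- g is constant on [s,t]
    have hgconst : ∀ u, s ≤ u → u ≤ t → g u = g s := by
      intro u h1 h2
      have hu1 : u ≤ 1 := h2.trans ht1
      apply le_antisymm
      · rw [hgst]
        exact hgm ⟨hs.le.trans h1, hu1⟩ ⟨h0t.le, ht1⟩ h2
      · exact hgm ⟨hs.le, hs1⟩ ⟨hs.le.trans h1, hu1⟩ h1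
    -- a point v ∈ (r,t) with f r < f v
    have hev : ∀ᶠ u in nhdsWithin t (Iio t), f r < f u :=
      (hfl t ⟨h0t, ht1⟩).eventually (eventually_gt_nhds hflt)
    obtain ⟨a, ha, hsubIoo⟩ := mem_nhdsLT_iff_exists_Ioo_subset.mp hev
    obtain ⟨v, hv1, hv2⟩ := exists_between (max_lt ha hrt')
    have hfv : f r < f v := hsubIoo ⟨lt_of_le_of_lt (le_max_left a r) hv1, hv2⟩
    have hrv : r < v := lt_of_le_of_lt (le_max_right a r) hv1
    have hv01 : v ≤ 1 := hv2.le.trans ht1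
    have h0v : 0 ≤ v := (hs.trans (hsr.trans hrv)).le
    -- threshold m
    set γ : ℝ := (f r + f v)/2 with hγ
    have hγ1 : f r < γ := by rw [hγ]; linarith
    have hγ2 : γ < f v := by rw [hγ]; linarith
    set M : Set ℝ := {u | u ∈ Icc r 1 ∧ f u ≤ γ} with hM
    have hMne : M.Nonempty := ⟨r, ⟨⟨le_refl r, hr1⟩, hγ1.le⟩⟩
    have hMbdd : BddAbove M := ⟨1, fun u hu => hu.1.2⟩
    set m : ℝ := sSup M with hm
    have hrm : r ≤ m := le_csSup hMbdd ⟨⟨le_refl r, hr1⟩, hγ1.le⟩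
    have hmv : m ≤ v := by
      apply csSup_le hMne
      intro u hu
      by_contra hcon
      push_neg at hcon
      have : f v ≤ f u := hfm ⟨h0v, hv01⟩ ⟨h0v.trans hcon.le, hu.1.2⟩ hcon.le
      linarith [hu.2]
    have hflow : ∀ u, 0 ≤ u → u < m → f u ≤ γ := by
      intro u h0 hum
      rcases lt_or_ge u r with h | h
      · exact le_trans (hfm ⟨h0, h.le.trans hr1⟩ ⟨(hs.trans hsr).le, hr1⟩ h.le) hγ1.le
      · obtain ⟨w, hwM, hw⟩ := exists_lt_of_lt_csSup hMne hum
        have hu1 : u ≤ 1 := hw.le.trans hwM.1.2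
        exact le_trans (hfm ⟨h0, hu1⟩ ⟨(hs.trans hsr).le.trans hwM.1.1, hwM.1.2⟩ hw.le) hwM.2
    have hfhigh : ∀ u, m < u → u ≤ 1 → γ < f u := by
      intro u h1 h2
      by_contra hcon
      push_neg at hcon
      have : u ∈ M := ⟨⟨hrm.trans h1.le, h2⟩, hcon⟩
      exact absurd (le_csSup hMbdd this) (not_le.mpr h1)
    have hsm : s < m := lt_of_lt_of_le hsr hrm
    have hmt : m < t := lt_of_le_of_lt hmv hv2
    -- the uniform variable and the vector X
    obtain ⟨U, hUmeas, hUI, hUcdf⟩ := St6.exists_uniform P hP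
    classical
    set σ : ℝ → ℝ := fun u => if s < u ∧ u < t then s + t - u else u with hσ
    have hσmeas : Measurable σ := by
      apply Measurable.ite
      · exact (measurableSet_Ioo (a := s) (b := t))
      · exact measurable_const.sub measurable_id
      · exact measurable_id
    set X : Fin 2 → Ω → ℝ := ![U, fun ω => σ (U ω)] with hX
    have hXmeas : ∀ i, Measurable (X i) := by
      intro i
      fin_cases i
      · simpa [hX] using hUmeas
      · simpa [hX, Function.comp_def] using hσmeas.comp hUmeas
    -- Z := g∘U (through a monotone extension)
    set cg : ℝ → ℝ := fun u => g (max 0 (min u 1)) with hcg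
    have hcgm : Monotone cg := by
      intro u u' hu
      apply hgm
      · constructor
        · exact le_max_left _ _
        · exact max_le zero_le_one (min_le_right _ _)
      · constructor
        · exact le_max_left _ _
        · exact max_le zero_le_one (min_le_right _ _)
      · exact max_le_max le_rfl (min_le_min hu le_rfl)
    have hcgU : ∀ ω, cg (U ω) = g (U ω) := by
      intro ω
      rw [hcg]
      simp only []
      rw [min_eq_left (hUI ω).2, max_eq_right (hUI ω).1]
    set Z : Ω → ℝ := fun ω => cg (U ω) with hZ
    have hZmeas : Measurable Z := hcgm.measurable.comp hUmeas
    have hZeq : Z = fun ω => g (U ω) := funext hcgU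
    have hQZ : ∀ p ∈ Icc (0:ℝ) 1, Q P Z p = g p := by
      rw [hZeq]
      exact St6.quantile_comp_uniform P hUI hUcdf hg
    -- g-comonotonicity of X
    have hgc : GComonotone P g X := by
      refine ⟨Z, hZmeas, hQZ, fun i => ?_⟩
      fin_cases i
      · apply ae_of_all
        rintro ⟨ω₁, ω₂⟩
        simp only [hX, Matrix.cons_val_zero, hZ]
        rcases le_total (U ω₁) (U ω₂) with h | h
        · have := mul_nonneg (neg_nonneg.mpr (sub_nonpos.mpr h))
            (neg_nonneg.mpr (sub_nonpos.mpr (hcgm h)))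
          rw [neg_mul_neg] at this
          exact this
        · exact mul_nonneg (sub_nonneg.mpr h) (sub_nonneg.mpr (hcgm h))
      · apply ae_of_all
        rintro ⟨ω₁, ω₂⟩
        simp only [hX, Matrix.cons_val_one, Matrix.head_cons, hZ]
        rw [hcgU ω₁, hcgU ω₂]
        set u₁ := U ω₁
        set u₂ := U ω₂
        have hu₁ : u₁ ∈ Icc (0:ℝ) 1 := hUI ω₁
        have hu₂ : u₂ ∈ Icc (0:ℝ) 1 := hUI ω₂
        have key : ∀ w₁ w₂ : ℝ, w₁ ∈ Icc (0:ℝ) 1 → w₂ ∈ Icc (0:ℝ) 1 →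
            0 ≤ (σ w₁ - σ w₂) * (g w₁ - g w₂) := by
          intro w₁ w₂ hw₁ hw₂
          by_cases h1 : s < w₁ ∧ w₁ < t
          · by_cases h2 : s < w₂ ∧ w₂ < t
            · have : g w₁ = g w₂ := by
                rw [hgconst w₁ h1.1.le h1.2.le, hgconst w₂ h2.1.le h2.2.le]
              rw [this, sub_self, mul_zero]
            · have hσ1 : σ w₁ = s + t - w₁ := if_pos h1
              have hσ2 : σ w₂ = w₂ := if_neg h2
              have hg1 : g w₁ = g s := hgconst w₁ h1.1.le h1.2.le
              rcases not_and_or.mp h2 with h2' | h2'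
              · push_neg at h2'
                have hgle : g w₂ ≤ g s := hgm hw₂ ⟨hs.le, hs1⟩ h2'
                apply mul_nonneg
                · rw [hσ1, hσ2]; linarith [h1.2]
                · rw [hg1]; linarith
              · push_neg at h2'
                have hgle : g t ≤ g w₂ := hgm ⟨h0t.le, ht1⟩ hw₂ h2'
                have hg1t : g w₁ = g t := by
                  rw [hg1, (hgconst t (le_of_lt hsr |> fun _ => hsr.le.trans hrt) (le_refl t)).symm]
                have hA : σ w₁ - σ w₂ ≤ 0 := by rw [hσ1, hσ2]; linarith [h1.1]
                have hB : g w₁ - g w₂ ≤ 0 := by rw [hg1t]; linarith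
                have := mul_nonneg (neg_nonneg.mpr hA) (neg_nonneg.mpr hB)
                rwa [neg_mul_neg] at this
          · by_cases h2 : s < w₂ ∧ w₂ < t
            · have hσ1 : σ w₁ = w₁ := if_neg h1
              have hσ2 : σ w₂ = s + t - w₂ := if_pos h2
              have hg2 : g w₂ = g s := hgconst w₂ h2.1.le h2.2.le
              rcases not_and_or.mp h1 with h1' | h1'
              · push_neg at h1'
                have hgle : g w₁ ≤ g s := hgm hw₁ ⟨hs.le, hs1⟩ h1'
                have hA : σ w₁ - σ w₂ ≤ 0 := by rw [hσ1, hσ2]; linarith [h2.2]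
                have hB : g w₁ - g w₂ ≤ 0 := by rw [hg2]; linarith
                have := mul_nonneg (neg_nonneg.mpr hA) (neg_nonneg.mpr hB)
                rwa [neg_mul_neg] at this
              · push_neg at h1'
                have hgle : g t ≤ g w₁ := hgm ⟨h0t.le, ht1⟩ hw₁ h1'
                have hg2t : g w₂ = g t := by
                  rw [hg2, (hgconst t (hsr.le.trans hrt) (le_refl t)).symm]
                apply mul_nonneg
                · rw [hσ1, hσ2]; linarith [h2.1]
                · rw [hg2t]; linarith
            · have hσ1 : σ w₁ = w₁ := if_neg h1
              have hσ2 : σ w₂ = w₂ := if_neg h2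
              rw [hσ1, hσ2]
              rcases le_total w₁ w₂ with h | h
              · have := mul_nonneg (neg_nonneg.mpr (sub_nonpos.mpr h))
                  (neg_nonneg.mpr (sub_nonpos.mpr (hgm hw₁ hw₂ h)))
                rwa [neg_mul_neg] at this
              · exact mul_nonneg (sub_nonneg.mpr h) (sub_nonneg.mpr (hgm hw₂ hw₁ h))
        exact key u₁ u₂ hu₁ hu₂
    -- apply the hypothesis
    obtain ⟨Z', hZ'meas, hQZ', hcoms⟩ := hR 2 X hXmeas hgc
    have hcomU : ComonotonePair P U Z' := by
      have := hcoms 0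
      simpa [hX] using this
    have hcomσ : ComonotonePair P (fun ω => σ (U ω)) Z' := by
      have := hcoms 1
      simpa [hX] using this
    have hae := St6.comonotone_uniform_ae P hUmeas hZ'meas hUI hUcdf hf hQZ' hcomU
    -- the contradiction
    set E : Set Ω := {ω | Z' ω = f (U ω) ∧ U ω ∈ Ioo (0:ℝ) 1} with hE
    have hEc : P Eᶜ = 0 := by
      have h := ae_iff.mp hae
      rw [hE, compl_setOf]
      exact h
    set B : Set Ω := {ω | U ω ∈ Ioo m t} ∩ E with hB
    set C : Set Ω := {ω | U ω ∈ Ioo s m} ∩ E with hC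
    have hposB : P B ≠ 0 := by
      intro h0
      have h1 : P {ω | U ω ∈ Ioo m t} ≤ P B + P Eᶜ := by
        refine le_trans (measure_mono ?_) (measure_union_le _ _)
        intro ω hω
        by_cases hωE : ω ∈ E
        · exact Or.inl ⟨hω, hωE⟩
        · exact Or.inr hωE
      rw [h0, hEc, add_zero] at h1
      have h2 := St6.uniform_Ioo_pos P hUmeas hUI hUcdf hmt
        (le_trans hs.le (le_of_lt hsm)) ht1
      have h3 : (0:ENNReal) < ENNReal.ofReal (t - m) := ENNReal.ofReal_pos.mpr (by linarith)
      exact absurd (le_trans h2 h1) (not_le.mpr h3)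
    have hposC : P C ≠ 0 := by
      intro h0
      have h1 : P {ω | U ω ∈ Ioo s m} ≤ P C + P Eᶜ := by
        refine le_trans (measure_mono ?_) (measure_union_le _ _)
        intro ω hω
        by_cases hωE : ω ∈ E
        · exact Or.inl ⟨hω, hωE⟩
        · exact Or.inr hωE
      rw [h0, hEc, add_zero] at h1
      have h2 := St6.uniform_Ioo_pos P hUmeas hUI hUcdf hsm hs.le
        (le_trans hmt.le ht1)
      have h3 : (0:ENNReal) < ENNReal.ofReal (m - s) := ENNReal.ofReal_pos.mpr (by linarith)
      exact absurd (le_trans h2 h1) (not_le.mpr h3)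
    have hneg : ∀ ω ∈ B, ∀ ω' ∈ C,
        ((fun ω => σ (U ω)) ω - (fun ω => σ (U ω)) ω') * (Z' ω - Z' ω') < 0 := by
      rintro ω ⟨hωI, hωE, hωIoo⟩ ω' ⟨hω'I, hω'E, hω'Ioo⟩
      simp only [mem_setOf_eq, mem_Ioo] at hωI hω'I
      show (σ (U ω) - σ (U ω')) * (Z' ω - Z' ω') < 0
      have hσω : σ (U ω) = s + t - U ω := if_pos ⟨hsm.trans hωI.1, hωI.2⟩
      have hσω' : σ (U ω') = s + t - U ω' := if_pos ⟨hω'I.1, hω'I.2.trans hmt⟩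
      apply mul_neg_of_neg_of_pos
      · rw [hσω, hσω']
        linarith [hωI.1, hω'I.2]
      · rw [hωE, hω'E]
        have h1 : γ < f (U ω) := hfhigh (U ω) hωI.1 hωIoo.2.le
        have h2 : f (U ω') ≤ γ := hflow (U ω') hω'Ioo.1.le hω'I.2
        linarith
    rcases St6.comonotone_null P hcomσ hneg with h | h
    · exact hposB h
    · exact hposC h
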